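/- Every torsion-free group satisfying property (N) is Frobenius injective; that is, if G is a group whose only element of finite order is the identity, and for every x ∈ G, every finite subset S ⊆ G and every integer n ≥ 1 the condition x^n ∈ Z(S) implies x ∈ Z(S), then for every integer k ≥ 1 the power map x ↦ x^k on G is injective. -/
import Mathlib

/-- Every torsion-free group satisfying property (N) is Frobenius injective. -/
theorem torsionFree_propertyN_frobenius_injective (G : Type*) [Group G]
    (htf : ∀ g : G, IsOfFinOrder g → g = 1)
    (hN : ∀ (x : G) (S : Finset G) (n : ℕ), 1 ≤ n →
      x ^ n ∈ Subgroup.centralizer (S : Set G) → x ∈ Subgroup.centralizer (S : Set G))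
    (k : ℕ) (hk : 1 ≤ k) :
    Function.Injective (fun x : G => x ^ k) := by
  intro a b hab
  simp only at hab
  have hmem : a ^ k ∈ Subgroup.centralizer (({b} : Finset G) : Set G) := by
    intro g hg
    simp only [Finset.coe_singleton, Set.mem_singleton_iff] at hg
    rw [hg, hab]
    exact (Commute.self_pow b k).eq
  have hcomm : a ∈ Subgroup.centralizer (({b} : Finset G) : Set G) :=
    hN a {b} k hk hmem
  have hc : b * a = a * b := hcomm b (by simp)
  have hcomm' : Commute a b := hc.symm
  have h1 : (a * b⁻¹) ^ k = 1 := by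
    rw [(hcomm'.inv_right).mul_pow, hab, inv_pow, mul_inv_cancel]
  have hfin : IsOfFinOrder (a * b⁻¹) :=
    isOfFinOrder_iff_pow_eq_one.mpr ⟨k, by omega, h1⟩
  exact mul_inv_eq_one.mp (htf _ hfin)
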